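/- Let Γ be a finite connected simplicial graph whose vertices are labeled by nontrivial cyclic groups and let G_Γ be the associated graph product. Then Out^pc(G_Γ) is abelian if and only if Γ contains no SILs. -/

import Mathlib

open Monoid

namespace ArXiv

universe u uG

variable {V : Type u}

/-- The star of a vertex: the vertex together with its neighbors. -/
def star (Γ : SimpleGraph V) (v : V) : Set V := insert v (Γ.neighborSet v)

/-- `C ⊆ V` is the vertex set of a connected component of the full subgraph of `Γ`
induced on `S`. -/
def IsCompOf (Γ : SimpleGraph V) (S : Set V) (C : Set V) : Prop :=
  ∃ c : (Γ.induce S).ConnectedComponent, C = Subtype.val '' c.supp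

/-- `Γ` has a separating intersection of links: there are distinct non-adjacent vertices
`v, w` such that some connected component of `Γ ∖ (lk(v) ∩ lk(w))` contains neither `v`
nor `w`. -/
def HasSIL (Γ : SimpleGraph V) : Prop :=
  ∃ v w : V, v ≠ w ∧ ¬ Γ.Adj v w ∧
    ∃ C : Set V, IsCompOf Γ ((Γ.neighborSet v ∩ Γ.neighborSet w)ᶜ) C ∧ v ∉ C ∧ w ∉ C

section Graph

variable {Γ : SimpleGraph V} {S T C D : Set V}

lemma induce_adj' {a b : ↥S} : (Γ.induce S).Adj a b ↔ Γ.Adj a b := by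
  simp [SimpleGraph.induce]

lemma compOf_nonempty (h : IsCompOf Γ S C) : C.Nonempty := by
  obtain ⟨c, rfl⟩ := h
  obtain ⟨⟨x, hx⟩, hmem⟩ := c.exists_rep
  exact ⟨x, ⟨⟨x, hx⟩, hmem, rfl⟩⟩

lemma compOf_subset (h : IsCompOf Γ S C) : C ⊆ S := by
  obtain ⟨c, rfl⟩ := h
  rintro x ⟨⟨y, hy⟩, -, rfl⟩
  exact hy

lemma compOf_adj_mem (h : IsCompOf Γ S C) {x y : V} (hx : x ∈ C) (hy : y ∈ S)
    (hadj : Γ.Adj x y) : y ∈ C := by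
  obtain ⟨c, rfl⟩ := h
  obtain ⟨⟨x, hxS⟩, hmk, rfl⟩ := hx
  refine ⟨⟨y, hy⟩, ?_, rfl⟩
  rw [SimpleGraph.ConnectedComponent.mem_supp_iff] at hmk ⊢
  rw [← hmk]
  exact SimpleGraph.ConnectedComponent.connectedComponentMk_eq_of_adj
    (induce_adj'.2 hadj.symm)

lemma compOf_eq_or_disjoint (h1 : IsCompOf Γ S C) (h2 : IsCompOf Γ S D) :
    C = D ∨ C ∩ D = ∅ := by
  obtain ⟨c, rfl⟩ := h1
  obtain ⟨d, rfl⟩ := h2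
  by_cases hcd : c = d
  · exact Or.inl (by rw [hcd])
  · refine Or.inr ?_
    ext x
    simp only [Set.mem_inter_iff, Set.mem_empty_iff_false, iff_false, not_and]
    rintro ⟨⟨y, hy⟩, hmk1, rfl⟩ ⟨⟨z, hz⟩, hmk2, hzz⟩
    cases Subtype.ext hzz.symm
    rw [SimpleGraph.ConnectedComponent.mem_supp_iff] at hmk1 hmk2
    exact hcd (hmk1 ▸ hmk2 ▸ rfl)

/-- Master walk lemma: walking inside `induce S` starting in a set `C` closed under
adjacency from `S` stays in `C`, and yields reachability in `induce C`. -/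
lemma walk_closed (hcl : ∀ x ∈ C, ∀ y ∈ S, Γ.Adj x y → y ∈ C) :
    ∀ {a b : ↥S} (_w : (Γ.induce S).Walk a b) (ha : ↑a ∈ C),
      ∃ hb : ↑b ∈ C, (Γ.induce C).Reachable ⟨a, ha⟩ ⟨b, hb⟩ := by
  intro a b w
  induction w with
  | nil => exact fun ha => ⟨ha, SimpleGraph.Reachable.refl _⟩
  | cons hadj p ih =>
    rename_i x y z
    intro hx
    have hyadj : Γ.Adj x.1 y.1 := induce_adj'.1 hadj
    have hy : ↑y ∈ C := hcl x.1 hx y.1 y.2 hyadj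
    obtain ⟨hb, hr⟩ := ih hy
    exact ⟨hb, (SimpleGraph.Adj.reachable
      ((induce_adj' (a := ⟨x.1, hx⟩) (b := ⟨y.1, hy⟩)).2 hyadj)).trans hr⟩

lemma compOf_closed (h : IsCompOf Γ S C) : ∀ x ∈ C, ∀ y ∈ S, Γ.Adj x y → y ∈ C :=
  fun x hx y hy hadj => compOf_adj_mem h hx hy hadj

lemma mem_compOf {c : (Γ.induce S).ConnectedComponent}
    (h : C = Subtype.val '' c.supp) {x : V} (hx : x ∈ C) :
    ∃ hxS : x ∈ S, (Γ.induce S).connectedComponentMk ⟨x, hxS⟩ = c := by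
  subst h
  obtain ⟨⟨x', hxS⟩, hmk, hxx⟩ := hx
  rcases hxx
  exact ⟨hxS, hmk⟩

lemma compOf_reach_induce (h : IsCompOf Γ S C) {x y : V} (hx : x ∈ C) (hy : y ∈ C) :
    (Γ.induce C).Reachable ⟨x, hx⟩ ⟨y, hy⟩ := by
  obtain ⟨c, hc⟩ := h
  obtain ⟨hxS, hmkx⟩ := mem_compOf hc hx
  obtain ⟨hyS, hmky⟩ := mem_compOf hc hy
  have hreach : (Γ.induce S).Reachable ⟨x, hxS⟩ ⟨y, hyS⟩ :=
    SimpleGraph.ConnectedComponent.exact (hmkx.trans hmky.symm)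
  obtain ⟨w⟩ := hreach
  obtain ⟨hb, hr⟩ := walk_closed (compOf_closed ⟨c, hc⟩) w hx
  exact hr

lemma reach_mono (hsub : C ⊆ T) {x y : V} (hx : x ∈ C) (hy : y ∈ C)
    (h : (Γ.induce C).Reachable ⟨x, hx⟩ ⟨y, hy⟩) :
    (Γ.induce T).Reachable ⟨x, hsub hx⟩ ⟨y, hsub hy⟩ := by
  obtain ⟨w⟩ := h
  have hcl : ∀ a ∈ T, ∀ b ∈ C, Γ.Adj a b → b ∈ T := fun a _ b hb _ => hsub hb
  obtain ⟨hb, hr⟩ := walk_closed (C := T) hcl w (hsub hx)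
  exact hr

lemma reach_in_compOf (h : IsCompOf Γ S C) {x y : V} (hx : x ∈ S) (hy : y ∈ S)
    (hr : (Γ.induce S).Reachable ⟨x, hx⟩ ⟨y, hy⟩) (hxC : x ∈ C) : y ∈ C := by
  obtain ⟨c, hc⟩ := h
  obtain ⟨hxS, hmkx⟩ := mem_compOf hc hxC
  rw [hc]
  exact ⟨⟨y, hy⟩, by
    rw [SimpleGraph.ConnectedComponent.mem_supp_iff, ← hmkx]
    exact (SimpleGraph.ConnectedComponent.sound hr.symm), rfl⟩

lemma exists_compOf_mem (hx : x ∈ S) : ∃ C, IsCompOf Γ S C ∧ x ∈ C :=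
  ⟨_, ⟨(Γ.induce S).connectedComponentMk ⟨x, hx⟩, rfl⟩, ⟨⟨x, hx⟩, rfl, rfl⟩⟩

lemma compOf_subset_compOf (h1 : IsCompOf Γ S C) (hsub : C ⊆ T)
    (h2 : IsCompOf Γ T D) {x : V} (hx : x ∈ C) (hxD : x ∈ D) : C ⊆ D := by
  intro y hy
  have hr := reach_mono hsub hx hy (compOf_reach_induce h1 hx hy)
  exact reach_in_compOf h2 (hsub hx) (hsub hy) hr hxD

lemma compOf_of_closed (h : IsCompOf Γ S C) (hsub : C ⊆ T)
    (hcl : ∀ x ∈ C, ∀ y ∈ T, Γ.Adj x y → y ∈ C) : IsCompOf Γ T C := by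
  obtain ⟨x, hx⟩ := compOf_nonempty h
  obtain ⟨D, hD, hxD⟩ := exists_compOf_mem (Γ := Γ) (hsub hx)
  have hCD : C ⊆ D := compOf_subset_compOf h hsub hD hx hxD
  have hDC : D ⊆ C := by
    intro y hy
    have hr := compOf_reach_induce hD hxD hy
    obtain ⟨w⟩ := hr
    exact (walk_closed (S := D) (C := C)
      (fun a ha b hb hadj => hcl a ha b (compOf_subset hD hb) hadj) w hx).1
  rw [Set.Subset.antisymm hCD hDC]
  exact hD

end Graph

section SIL

variable {Γ : SimpleGraph V} {v w : V} {C D : Set V}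

lemma mem_star_self : v ∈ star Γ v := Set.mem_insert _ _

lemma not_mem_star (h : v ≠ w) (hadj : ¬ Γ.Adj w v) : v ∈ (star Γ w)ᶜ := by
  intro hmem
  rcases hmem with h' | h'
  · exact h h'
  · exact hadj h'

lemma compOf_star_subset (h : IsCompOf Γ (star Γ v)ᶜ C) {x : V} (hx : x ∈ C) :
    x ≠ v ∧ ¬ Γ.Adj v x := by
  have := compOf_subset h hx
  exact ⟨fun he => this (he ▸ Set.mem_insert _ _), fun ha => this (Set.mem_insert_of_mem _ ha)⟩

/-- If `w ∉ C` for a component `C` of `Γ ∖ st(v)` (with `v ≠ w` non-adjacent),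
then no vertex of `C` is adjacent to `w`, so `C ⊆ st(w)ᶜ`. -/
lemma compOf_star_avoid (hC : IsCompOf Γ (star Γ v)ᶜ C) (hvw : v ≠ w)
    (hnadj : ¬ Γ.Adj v w) (hwC : w ∉ C) : C ⊆ (star Γ w)ᶜ := by
  intro x hx
  refine not_mem_star ?_ ?_
  · rintro rfl; exact hwC hx
  · intro hadj
    exact hwC (compOf_adj_mem hC hx (not_mem_star (Ne.symm hvw) hnadj)
      hadj.symm)

/-- A common component of `Γ ∖ st(v)` and `Γ ∖ st(w)` avoiding `v` and `w` gives a SIL. -/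
lemma sil_of_common_comp (hvw : v ≠ w) (hnadj : ¬ Γ.Adj v w)
    (hCv : IsCompOf Γ (star Γ v)ᶜ C) (hCw : IsCompOf Γ (star Γ w)ᶜ C) : HasSIL Γ := by
  refine ⟨v, w, hvw, hnadj, C, ?_, ?_, ?_⟩
  · -- C is a component of Γ ∖ (lk v ∩ lk w)
    refine compOf_of_closed hCv ?_ ?_
    · intro x hx
      simp only [Set.mem_compl_iff, Set.mem_inter_iff, SimpleGraph.mem_neighborSet]
      rintro ⟨h1, h2⟩
      exact (compOf_star_subset hCv hx).2 h1
    · intro x hx y hy hadj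
      simp only [Set.mem_compl_iff, Set.mem_inter_iff, SimpleGraph.mem_neighborSet,
        not_and] at hy
      by_cases hyv : y ∈ (star Γ v)ᶜ
      · exact compOf_adj_mem hCv hx hyv hadj
      · -- y ∈ st v: y = v impossible since x not adjacent to v; so y ∈ lk v, y ∉ lk w
        have hyv' : y = v ∨ Γ.Adj v y := by
          by_contra hcon
          push_neg at hcon
          exact hyv (not_mem_star hcon.1 hcon.2)
        rcases hyv' with rfl | hyadj
        · exact absurd hadj.symm (compOf_star_subset hCv hx).2
        · have hynw : ¬ Γ.Adj w y := fun hwy => (hy hyadj) hwy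
          have hyw : y ∈ (star Γ w)ᶜ := not_mem_star
            (fun he => hnadj (he ▸ hyadj)) hynw
          have : y ∈ C := compOf_adj_mem hCw hx hyw hadj
          exact absurd hyadj (compOf_star_subset hCv this).2
  · exact fun hv => (compOf_star_subset hCv hv).1 rfl
  · exact fun hw => (compOf_star_subset hCw hw).1 rfl

/-- From a SIL, extract a common component. -/
lemma common_comp_of_sil (h : HasSIL Γ) :
    ∃ (v w : V) (C : Set V), v ≠ w ∧ ¬ Γ.Adj v w ∧
      IsCompOf Γ (star Γ v)ᶜ C ∧ IsCompOf Γ (star Γ w)ᶜ C ∧ v ∉ C ∧ w ∉ C := by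
  obtain ⟨v, w, hvw, hnadj, C, hC, hvC, hwC⟩ := h
  have hkey : ∀ u : V, u ≠ v → ¬ Γ.Adj u v → u ∉ C → IsCompOf Γ (star Γ u)ᶜ C → False → True :=
    fun _ _ _ _ _ _ => trivial
  have hsubv : C ⊆ (star Γ v)ᶜ := by
    intro x hx
    refine not_mem_star (fun he => hvC (he ▸ hx)) ?_
    intro hadj
    refine hvC (compOf_adj_mem hC hx ?_ hadj.symm)
    simp only [Set.mem_compl_iff, Set.mem_inter_iff, SimpleGraph.mem_neighborSet]
    rintro ⟨h1, -⟩
    exact Γ.irrefl h1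
  have hsubw : C ⊆ (star Γ w)ᶜ := by
    intro x hx
    refine not_mem_star (fun he => hwC (he ▸ hx)) ?_
    intro hadj
    refine hwC (compOf_adj_mem hC hx ?_ hadj.symm)
    simp only [Set.mem_compl_iff, Set.mem_inter_iff, SimpleGraph.mem_neighborSet]
    rintro ⟨-, h2⟩
    exact Γ.irrefl h2
  have hLc : ∀ y : V, y ∈ (star Γ v)ᶜ ∨ y ∈ (star Γ w)ᶜ →
      y ∈ ((Γ.neighborSet v ∩ Γ.neighborSet w)ᶜ : Set V) := by
    rintro y (hy | hy) <;>
    · simp only [Set.mem_compl_iff, Set.mem_inter_iff, SimpleGraph.mem_neighborSet, not_and]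
      intro h1 h2
      exact hy (Set.mem_insert_of_mem _ (by assumption))
  refine ⟨v, w, C, hvw, hnadj, ?_, ?_, hvC, hwC⟩
  · exact compOf_of_closed hC hsubv (fun x hx y hy hadj =>
      compOf_adj_mem hC hx (hLc y (Or.inl hy)) hadj)
  · exact compOf_of_closed hC hsubw (fun x hx y hy hadj =>
      compOf_adj_mem hC hx (hLc y (Or.inr hy)) hadj)

/-- Key covering lemma: if there is no SIL, `v ∈ D`, `w ∈ C`, then every vertex outside
`C ∪ D` is adjacent to both `v` and `w`. -/
lemma cover_of_noSIL (hnosil : ¬ HasSIL Γ) (hvw : v ≠ w) (hnadj : ¬ Γ.Adj v w)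
    (hC : IsCompOf Γ (star Γ v)ᶜ C) (hD : IsCompOf Γ (star Γ w)ᶜ D)
    (hwC : w ∈ C) (hvD : v ∈ D) {u : V} (huC : u ∉ C) (huD : u ∉ D) :
    Γ.Adj v u ∧ Γ.Adj w u := by
  set L : Set V := (Γ.neighborSet v ∩ Γ.neighborSet w)ᶜ with hLdef
  by_contra hcon
  have huL : u ∈ L := by
    simp only [hLdef, Set.mem_compl_iff, Set.mem_inter_iff, SimpleGraph.mem_neighborSet]
    intro hmem
    exact hcon ⟨hmem.1, hmem.2⟩
  have hlkw : ∀ y : V, Γ.Adj w y → ¬ Γ.Adj v y → y ∈ C := by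
    intro y hwy hvy
    refine compOf_adj_mem hC hwC ?_ hwy
    exact not_mem_star (fun he => hnadj (by rw [he] at hwy; exact hwy.symm)) hvy
  have hlkv : ∀ y : V, Γ.Adj v y → ¬ Γ.Adj w y → y ∈ D := by
    intro y hvy hwy
    refine compOf_adj_mem hD hvD ?_ hvy
    exact not_mem_star (fun he => hnadj (by rw [he] at hvy; exact hvy)) hwy
  have hclosed : ∀ x ∈ (L \ (C ∪ D) : Set V), ∀ y ∈ L, Γ.Adj x y →
      y ∈ (L \ (C ∪ D) : Set V) := by
    rintro x ⟨hxL, hxM⟩ y hyL hadj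
    refine ⟨hyL, ?_⟩
    rintro (hyC | hyD)
    · by_cases hxv : x ∈ (star Γ v)ᶜ
      · exact hxM (Or.inl (compOf_adj_mem hC hyC hxv hadj.symm))
      · have hxv' : x = v ∨ Γ.Adj v x := by
          by_contra hc; push_neg at hc; exact hxv (not_mem_star hc.1 hc.2)
        rcases hxv' with rfl | hvx
        · exact hxM (Or.inr hvD)
        · have : ¬ Γ.Adj w x := by
            intro hwx
            simp only [hLdef, Set.mem_compl_iff, Set.mem_inter_iff,
              SimpleGraph.mem_neighborSet] at hxL
            exact hxL ⟨hvx, hwx⟩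
          exact hxM (Or.inr (hlkv x hvx this))
    · by_cases hxw : x ∈ (star Γ w)ᶜ
      · exact hxM (Or.inr (compOf_adj_mem hD hyD hxw hadj.symm))
      · have hxw' : x = w ∨ Γ.Adj w x := by
          by_contra hc; push_neg at hc; exact hxw (not_mem_star hc.1 hc.2)
        rcases hxw' with rfl | hwx
        · exact hxM (Or.inl hwC)
        · have : ¬ Γ.Adj v x := by
            intro hvx
            simp only [hLdef, Set.mem_compl_iff, Set.mem_inter_iff,
              SimpleGraph.mem_neighborSet] at hxL
            exact hxL ⟨hvx, hwx⟩
          exact hxM (Or.inl (hlkw x hwx this))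
  obtain ⟨E, hE, huE⟩ := exists_compOf_mem (Γ := Γ) (S := L) huL
  have hvwE : v ∈ E ∨ w ∈ E := by
    by_contra hc
    push_neg at hc
    exact hnosil ⟨v, w, hvw, hnadj, E, hE, hc.1, hc.2⟩
  have hu' : u ∈ (L \ (C ∪ D) : Set V) := ⟨huL, by rintro (h | h); exacts [huC h, huD h]⟩
  rcases hvwE with hvE | hwE
  · have hr := compOf_reach_induce hE huE hvE
    have hr' := reach_mono (T := L) (compOf_subset hE) huE hvE hr
    obtain ⟨wk⟩ := hr'
    obtain ⟨hmem, -⟩ := walk_closed (S := L) hclosed wk hu'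
    exact hmem.2 (Or.inr hvD)
  · have hr := compOf_reach_induce hE huE hwE
    have hr' := reach_mono (T := L) (compOf_subset hE) huE hwE hr
    obtain ⟨wk⟩ := hr'
    obtain ⟨hmem, -⟩ := walk_closed (S := L) hclosed wk hu'
    exact hmem.2 (Or.inl hwC)

end SIL

variable (Γ : SimpleGraph V) (G : V → Type uG) [∀ v, Group (G v)]

/-- The commutator relators defining the graph product. -/
def rels : Set (Monoid.CoprodI G) :=
  {x | ∃ (v w : V) (_ : Γ.Adj v w) (g : G v) (h : G w),
    x = CoprodI.of g * CoprodI.of h * (CoprodI.of g)⁻¹ * (CoprodI.of h)⁻¹}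

/-- The graph product of the vertex groups `G v` over the graph `Γ`: the quotient of the
free product by the normal closure of the commutators of adjacent vertex groups. -/
def GraphProduct : Type (max u uG) :=
  Monoid.CoprodI G ⧸ Subgroup.normalClosure (rels Γ G)

instance : Group (GraphProduct Γ G) :=
  inferInstanceAs (Group (Monoid.CoprodI G ⧸ Subgroup.normalClosure (rels Γ G)))

/-- The canonical map from a vertex group into the graph product. -/
def of {v : V} : G v →* GraphProduct Γ G :=
  (QuotientGroup.mk' (Subgroup.normalClosure (rels Γ G))).comp CoprodI.of

theorem of_commute {v w : V} (h : Γ.Adj v w) (g : G v) (k : G w) :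
    Commute (of Γ G g) (of Γ G k) := by
  rw [← commutatorElement_eq_one_iff_commute]
  have hmem : (CoprodI.of g * CoprodI.of k * (CoprodI.of g)⁻¹ * (CoprodI.of k)⁻¹ :
      Monoid.CoprodI G) ∈ Subgroup.normalClosure (rels Γ G) :=
    Subgroup.subset_normalClosure ⟨v, w, h, g, k, rfl⟩
  have h1 : (QuotientGroup.mk' (Subgroup.normalClosure (rels Γ G)))
      (CoprodI.of g * CoprodI.of k * (CoprodI.of g)⁻¹ * (CoprodI.of k)⁻¹) = 1 :=
    (QuotientGroup.eq_one_iff _).mpr hmem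
  simp only [map_mul, map_inv] at h1
  rw [commutatorElement_def]
  exact h1

/-- `π` is the partial conjugation `π_{v,C}`, for vertex groups with chosen generators
`gen`: it conjugates the generators in `C` by (the generator of) `v` and fixes all other
generators. -/
def IsPartialConj (gen : ∀ v, G v) (π : MulAut (GraphProduct Γ G)) (v : V) (C : Set V) :
    Prop :=
  (∀ u ∈ C, ∀ g : G u, π (of Γ G g) = of Γ G (gen v) * of Γ G g * (of Γ G (gen v))⁻¹) ∧
  (∀ u ∉ C, ∀ g : G u, π (of Γ G g) = of Γ G g)

/-- `π` is the partial conjugation `π_{a,C}` by the element `a` of the vertex group `G v`: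
it conjugates the vertex groups in `C` by `a` and fixes all other vertex groups. -/
def IsPartialConjBy {v : V} (a : G v) (π : MulAut (GraphProduct Γ G)) (C : Set V) : Prop :=
  (∀ u ∈ C, ∀ g : G u, π (of Γ G g) = of Γ G a * of Γ G g * (of Γ G a)⁻¹) ∧
  (∀ u ∉ C, ∀ g : G u, π (of Γ G g) = of Γ G g)

/-- The vertex set of the graph `Γ̃`: pairs `p_{v,C}` where `C` is a connected component
of `Γ ∖ st(v)`. -/
def TV : Type u := {p : V × Set V // IsCompOf Γ ((star Γ p.1)ᶜ) p.2}

/-- The graph `Γ̃`: vertices `p_{v,C}` and `p_{w,D}` are joined by an edge unless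
`v, w` are distinct non-adjacent vertices with `v ∈ D` and `w ∈ C`. -/
def tilde : SimpleGraph (TV Γ) where
  Adj p q := p ≠ q ∧
    ¬(p.1.1 ≠ q.1.1 ∧ ¬ Γ.Adj p.1.1 q.1.1 ∧ p.1.1 ∈ q.1.2 ∧ q.1.1 ∈ p.1.2)
  symm := ⟨by
    rintro p q ⟨h1, h2⟩
    exact ⟨h1.symm, fun ⟨a, b, c, d⟩ => h2 ⟨a.symm, fun e => b e.symm, d, c⟩⟩⟩
  loopless := ⟨fun p h => h.1 rfl⟩

/-- The graph product `G_{Γ̃}`, where the vertex `p_{v,C}` is labeled by (a copy of) the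
group `G v`. -/
abbrev TildeProduct : Type (max u uG) :=
  GraphProduct (tilde Γ) (fun p : TV Γ => G p.1.1)

/-- The element `p_v = ∏_C p_{v,C} ∈ G_{Γ̃}`, the product over all connected components
`C` of `Γ ∖ st(v)` (the factors pairwise commute). -/
noncomputable def pvert [Finite V] (gen : ∀ v, G v) (v : V) : TildeProduct Γ G :=
  haveI : Fintype {C : Set V // IsCompOf Γ ((star Γ v)ᶜ) C} := Fintype.ofFinite _
  Finset.noncommProd (Finset.univ : Finset {C : Set V // IsCompOf Γ ((star Γ v)ᶜ) C})
    (fun c => of (tilde Γ) (fun p : TV Γ => G p.1.1) (v := ⟨(v, c.1), c.2⟩) (gen v))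
    (by
      intro a _ b _ hab
      have hadj : (tilde Γ).Adj ⟨(v, a.1), a.2⟩ ⟨(v, b.1), b.2⟩ := by
        refine And.intro (fun h => hab (Subtype.ext (congrArg (fun x : TV Γ => x.1.2) h))) ?_
        rintro ⟨hne, -⟩
        exact hne rfl
      exact of_commute (tilde Γ) (fun p : TV Γ => G p.1.1) hadj (gen v) (gen v))

/-- The set `Δ` of vertices adjacent to every other vertex of `Γ`. -/
def Delta (Γ : SimpleGraph V) : Set V := {v | ∀ u, u ≠ v → Γ.Adj v u}

/-- The subgroup of the graph product generated by the vertex groups `G v`, `v ∈ T`. -/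
def vertexSubgroup (T : Set V) : Subgroup (GraphProduct Γ G) :=
  Subgroup.closure {x | ∃ v ∈ T, ∃ g : G v, x = of Γ G g}

/-- `w` is a reduced word for the element `g` of the graph product: a minimal length
expression of `g` as a product of nontrivial elements of vertex groups. -/
def IsReducedWord (g : GraphProduct Γ G) (w : List (Σ v : V, G v)) : Prop :=
  (w.map fun l => of Γ G l.2).prod = g ∧ (∀ l ∈ w, l.2 ≠ 1) ∧
    ∀ w' : List (Σ v : V, G v), (w'.map fun l => of Γ G l.2).prod = g →
      w.length ≤ w'.length

theorem hom_ext {H : Type*} [Monoid H] (f g : GraphProduct Γ G →* H)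
    (h : ∀ (v : V) (x : G v), f (of Γ G x) = g (of Γ G x)) : f = g := by
  have key : f.comp (QuotientGroup.mk' (Subgroup.normalClosure (rels Γ G))) =
      g.comp (QuotientGroup.mk' (Subgroup.normalClosure (rels Γ G))) :=
    Monoid.CoprodI.ext_hom _ _ (fun i => MonoidHom.ext (fun x => h i x))
  ext x
  obtain ⟨y, rfl⟩ := QuotientGroup.mk'_surjective (Subgroup.normalClosure (rels Γ G)) x
  exact DFunLike.congr_fun key y

theorem maut_ext (α β : MulAut (GraphProduct Γ G))
    (h : ∀ (v : V) (x : G v), α (of Γ G x) = β (of Γ G x)) : α = β := by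
  have key := hom_ext Γ G α.toMonoidHom β.toMonoidHom h
  exact MulEquiv.ext fun x => DFunLike.congr_fun key x

/-- The universal property of the graph product. -/
def glift {H : Type*} [Group H] (f : ∀ v, G v →* H)
    (hf : ∀ (v w : V), Γ.Adj v w → ∀ (g : G v) (k : G w), Commute (f v g) (f w k)) :
    GraphProduct Γ G →* H :=
  QuotientGroup.lift _ (CoprodI.lift f) (by
    intro x hx
    have hsub : Subgroup.normalClosure (rels Γ G) ≤ (CoprodI.lift f).ker := by
      apply Subgroup.normalClosure_le_normal
      rintro y ⟨v', w', hadj, g, k, rfl⟩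
      simp only [SetLike.mem_coe, MonoidHom.mem_ker, map_mul, map_inv, CoprodI.lift_of]
      rw [← commutatorElement_def]
      exact commutatorElement_eq_one_iff_commute.2 (hf v' w' hadj g k)
    exact hsub hx)

theorem glift_of {H : Type*} [Group H] (f : ∀ v, G v →* H)
    (hf : ∀ (v w : V), Γ.Adj v w → ∀ (g : G v) (k : G w), Commute (f v g) (f w k))
    {v : V} (x : G v) : glift Γ G f hf (of Γ G x) = f v x := by
  show QuotientGroup.lift _ (CoprodI.lift f) _
    (QuotientGroup.mk' (Subgroup.normalClosure (rels Γ G)) (CoprodI.of x)) = f v x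
  rw [QuotientGroup.mk'_apply, QuotientGroup.lift_mk, CoprodI.lift_of]

private lemma conj_swap {Gp : Type*} [Group Gp] {a b : Gp} (hab : a * b = b * a) (y : Gp) :
    b * (a * y * a⁻¹) * b⁻¹ = a * (b * y * b⁻¹) * a⁻¹ := by
  have hinv : a⁻¹ * b⁻¹ = b⁻¹ * a⁻¹ := by rw [← mul_inv_rev, ← mul_inv_rev, hab]
  calc b * (a * y * a⁻¹) * b⁻¹ = (b * a) * y * (a⁻¹ * b⁻¹) := by group
  _ = (a * b) * y * (b⁻¹ * a⁻¹) := by rw [← hab, hinv]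
  _ = a * (b * y * b⁻¹) * a⁻¹ := by group

/-- The key case analysis: with no SILs, any two partial conjugations commute modulo
an explicit inner automorphism. -/
theorem pc_comm (hnosil : ¬ HasSIL Γ) (gen : ∀ v, G v) {v w : V} {C D : Set V}
    (hC : IsCompOf Γ (star Γ v)ᶜ C) (hD : IsCompOf Γ (star Γ w)ᶜ D)
    {πp πq : MulAut (GraphProduct Γ G)}
    (hp : IsPartialConjBy Γ G (gen v) πp C) (hq : IsPartialConjBy Γ G (gen w) πq D) :
    ∃ g : GraphProduct Γ G, πp * πq = MulAut.conj g * (πq * πp) := by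
  obtain ⟨hp1, hp2⟩ := hp
  obtain ⟨hq1, hq2⟩ := hq
  have hvC : v ∉ C := fun h => (compOf_star_subset hC h).1 rfl
  have hwD : w ∉ D := fun h => (compOf_star_subset hD h).1 rfl
  by_cases hvw : v = w
  · subst hvw
    rcases compOf_eq_or_disjoint hC hD with rfl | hdisj
    · -- same component: πp = πq
      have heq : πp = πq := by
        refine maut_ext Γ G _ _ fun u x => ?_
        by_cases hu : u ∈ C
        · rw [hp1 u hu x, hq1 u hu x]
        · rw [hp2 u hu x, hq2 u hu x]
      refine ⟨1, ?_⟩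
      rw [heq, map_one, one_mul]
    · -- disjoint components with the same conjugating vertex
      refine ⟨1, ?_⟩
      rw [map_one, one_mul]
      refine maut_ext Γ G _ _ fun u x => ?_
      simp only [MulAut.mul_apply]
      have hdisj' : ∀ z : V, z ∈ C → z ∈ D → False := by
        intro z h1 h2
        exact absurd (Set.mem_inter h1 h2) (by rw [hdisj]; exact Set.notMem_empty z)
      by_cases huC : u ∈ C
      · have huD : u ∉ D := fun h => hdisj' u huC h
        simp only [map_mul, map_inv, hq2 u huD x, hp1 u huC x, hq2 v hwD (gen v)]
      · by_cases huD : u ∈ D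
        · simp only [map_mul, map_inv, hq1 u huD x, hp2 u huC x, hp2 v hvC (gen v)]
        · simp only [hq2 u huD x, hp2 u huC x]
  · by_cases hadj : Γ.Adj v w
    · -- adjacent vertices: the partial conjugations commute
      have hwC : w ∉ C := fun h => compOf_subset hC h (Set.mem_insert_of_mem _ hadj)
      have hvD : v ∉ D := fun h => compOf_subset hD h (Set.mem_insert_of_mem _ hadj.symm)
      have hab : of Γ G (gen v) * of Γ G (gen w) = of Γ G (gen w) * of Γ G (gen v) :=
        (of_commute Γ G hadj (gen v) (gen w)).eq
      refine ⟨1, ?_⟩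
      rw [map_one, one_mul]
      refine maut_ext Γ G _ _ fun u x => ?_
      simp only [MulAut.mul_apply]
      by_cases huC : u ∈ C <;> by_cases huD : u ∈ D
      · simp only [map_mul, map_inv, hq1 u huD x, hp1 u huC x, hp2 w hwC (gen w),
          hq2 v hvD (gen v)]
        exact conj_swap hab (of Γ G x)
      · simp only [map_mul, map_inv, hq2 u huD x, hp1 u huC x, hq2 v hvD (gen v)]
      · simp only [map_mul, map_inv, hq1 u huD x, hp2 u huC x, hp2 w hwC (gen w)]
      · simp only [hq2 u huD x, hp2 u huC x]
    · -- non-adjacent distinct vertices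
      have hnadj' : ¬ Γ.Adj w v := fun h => hadj h.symm
      by_cases hwC : w ∈ C <;> by_cases hvD : v ∈ D
      · -- w ∈ C, v ∈ D : commutator is conjugation by [a, b]
        refine ⟨of Γ G (gen v) * of Γ G (gen w) * (of Γ G (gen v))⁻¹ * (of Γ G (gen w))⁻¹, ?_⟩
        refine maut_ext Γ G _ _ fun u x => ?_
        simp only [MulAut.mul_apply, MulAut.conj_apply]
        have hwC' : w ∈ C := hwC
        have hvD' : v ∈ D := hvD
        by_cases huC : u ∈ C <;> by_cases huD : u ∈ D
        · simp only [map_mul, map_inv, hq1 u huD x, hp1 u huC x, hp1 w hwC' (gen w),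
            hq1 v hvD' (gen v)]
          group
        · simp only [map_mul, map_inv, hq2 u huD x, hp1 u huC x, hq1 v hvD' (gen v)]
          group
        · simp only [map_mul, map_inv, hq1 u huD x, hp2 u huC x, hp1 w hwC' (gen w)]
          group
        · -- outside C ∪ D: adjacent to both v and w
          obtain ⟨hadjv, hadjw⟩ := cover_of_noSIL hnosil hvw hadj hC hD hwC hvD huC huD
          have hax : Commute (of Γ G (gen v)) (of Γ G x) := of_commute Γ G hadjv (gen v) x
          have hbx : Commute (of Γ G (gen w)) (of Γ G x) := of_commute Γ G hadjw (gen w) x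
          have hcx : Commute (of Γ G (gen v) * of Γ G (gen w) * (of Γ G (gen v))⁻¹ *
              (of Γ G (gen w))⁻¹) (of Γ G x) :=
            ((hax.mul_left hbx).mul_left hax.inv_left).mul_left hbx.inv_left
          simp only [hq2 u huD x, hp2 u huC x]
          rw [hcx.eq, mul_inv_cancel_right]
      · -- w ∈ C, v ∉ D : D ⊆ C (or a SIL)
        have hDsub : D ⊆ (star Γ v)ᶜ := compOf_star_avoid hD (Ne.symm hvw) hnadj' hvD
        obtain ⟨x0, hx0⟩ := compOf_nonempty hD
        obtain ⟨C'', hC'', hx0C''⟩ := exists_compOf_mem (Γ := Γ) (hDsub hx0)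
        have hDC'' : D ⊆ C'' := compOf_subset_compOf hD hDsub hC'' hx0 hx0C''
        rcases compOf_eq_or_disjoint hC'' hC with heq | hdisj
        · -- D ⊆ C: exact commutation
          have hDC : D ⊆ C := heq ▸ hDC''
          refine ⟨1, ?_⟩
          rw [map_one, one_mul]
          refine maut_ext Γ G _ _ fun u x => ?_
          simp only [MulAut.mul_apply]
          by_cases huD : u ∈ D
          · have huC : u ∈ C := hDC huD
            simp only [map_mul, map_inv, hq1 u huD x, hp1 u huC x, hp1 w hwC (gen w),
              hq2 v hvD (gen v)]
            group
          · by_cases huC : u ∈ C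
            · simp only [map_mul, map_inv, hq2 u huD x, hp1 u huC x, hq2 v hvD (gen v)]
            · simp only [hq2 u huD x, hp2 u huC x]
        · -- C'' is a common component avoiding v and w: SIL
          exfalso
          have hwC'' : w ∉ C'' := fun h =>
            (Set.eq_empty_iff_forall_notMem.1 hdisj w) ⟨h, hwC⟩
          have hC''sub : C'' ⊆ (star Γ w)ᶜ := compOf_star_avoid hC'' hvw hadj hwC''
          have hC''D : C'' ⊆ D := compOf_subset_compOf hC'' hC''sub hD hx0C'' hx0
          have : D = C'' := le_antisymm hDC'' hC''D
          exact hnosil (sil_of_common_comp hvw hadj (this ▸ hC'') hD)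
      · -- w ∉ C, v ∈ D : C ⊆ D (or a SIL), symmetric
        have hCsub : C ⊆ (star Γ w)ᶜ := compOf_star_avoid hC hvw hadj hwC
        obtain ⟨x0, hx0⟩ := compOf_nonempty hC
        obtain ⟨D'', hD'', hx0D''⟩ := exists_compOf_mem (Γ := Γ) (hCsub hx0)
        have hCD'' : C ⊆ D'' := compOf_subset_compOf hC hCsub hD'' hx0 hx0D''
        rcases compOf_eq_or_disjoint hD'' hD with heq | hdisj
        · have hCD : C ⊆ D := heq ▸ hCD''
          refine ⟨1, ?_⟩
          rw [map_one, one_mul]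
          refine maut_ext Γ G _ _ fun u x => ?_
          simp only [MulAut.mul_apply]
          by_cases huC : u ∈ C
          · have huD : u ∈ D := hCD huC
            simp only [map_mul, map_inv, hq1 u huD x, hp1 u huC x, hp2 w hwC (gen w),
              hq1 v hvD (gen v)]
            group
          · by_cases huD : u ∈ D
            · simp only [map_mul, map_inv, hq1 u huD x, hp2 u huC x, hp2 w hwC (gen w)]
            · simp only [hq2 u huD x, hp2 u huC x]
        · exfalso
          have hvD'' : v ∉ D'' := fun h =>
            (Set.eq_empty_iff_forall_notMem.1 hdisj v) ⟨h, hvD⟩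
          have hD''sub : D'' ⊆ (star Γ v)ᶜ :=
            compOf_star_avoid hD'' (Ne.symm hvw) hnadj' hvD''
          have hD''C : D'' ⊆ C := compOf_subset_compOf hD'' hD''sub hC hx0D'' hx0
          have : C = D'' := le_antisymm hCD'' hD''C
          exact hnosil (sil_of_common_comp (Ne.symm hvw) hnadj' (this ▸ hD'') hC)
      · -- w ∉ C, v ∉ D : C ∩ D = ∅ (or a SIL)
        have hCsub : C ⊆ (star Γ w)ᶜ := compOf_star_avoid hC hvw hadj hwC
        have hdisj : ∀ z : V, z ∈ C → z ∈ D → False := by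
          intro z h1 h2
          have hCD : C ⊆ D := compOf_subset_compOf hC hCsub hD h1 h2
          have hDsub : D ⊆ (star Γ v)ᶜ := compOf_star_avoid hD (Ne.symm hvw) hnadj' hvD
          have hDC : D ⊆ C := compOf_subset_compOf hD hDsub hC h2 h1
          have : C = D := le_antisymm hCD hDC
          exact hnosil (sil_of_common_comp hvw hadj hC (this ▸ hD))
        refine ⟨1, ?_⟩
        rw [map_one, one_mul]
        refine maut_ext Γ G _ _ fun u x => ?_
        simp only [MulAut.mul_apply]
        by_cases huC : u ∈ C
        · have huD : u ∉ D := fun h => hdisj u huC h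
          simp only [map_mul, map_inv, hq2 u huD x, hp1 u huC x, hq2 v hvD (gen v)]
        · by_cases huD : u ∈ D
          · simp only [map_mul, map_inv, hq1 u huD x, hp2 u huC x, hp2 w hwC (gen w)]
          · simp only [hq2 u huD x, hp2 u huC x]



/-- The retraction of the graph product onto the free product of the vertex groups of a
set of pairwise non-adjacent vertices. -/
def killTo (T : Set V) [DecidablePred (· ∈ T)] (hT : ∀ a ∈ T, ∀ b ∈ T, ¬ Γ.Adj a b) :
    GraphProduct Γ G →* Monoid.CoprodI (fun i : T => G i.1) :=
  glift Γ G
    (fun u => if h : u ∈ T then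
      (Monoid.CoprodI.of (M := fun i : T => G i.1) (i := ⟨u, h⟩)) else 1)
    (by
      intro a b hadj ga kb
      by_cases ha : a ∈ T
      · by_cases hb : b ∈ T
        · exact absurd hadj (hT a ha b hb)
        · rw [dif_neg hb, MonoidHom.one_apply]
          exact Commute.one_right _
      · rw [dif_neg ha, MonoidHom.one_apply]
        exact Commute.one_left _)

lemma killTo_of_mem (T : Set V) [DecidablePred (· ∈ T)]
    (hT : ∀ a ∈ T, ∀ b ∈ T, ¬ Γ.Adj a b) {u : V} (h : u ∈ T)
    (x : G u) :
    killTo Γ G T hT (of Γ G x) =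
      Monoid.CoprodI.of (M := fun i : T => G i.1) (i := ⟨u, h⟩) x := by
  rw [killTo, glift_of]
  dsimp only
  rw [dif_pos h]

section FP

open Monoid.CoprodI

variable {ι : Type*} {H : ι → Type*} [∀ i, Group (H i)]
variable [DecidableEq ι] [∀ i, DecidableEq (H i)]

lemma word_prod_injective :
    Function.Injective (Word.prod : Word H → Monoid.CoprodI H) := by
  have h : (Word.prod : Word H → Monoid.CoprodI H) = ⇑(Word.equiv (M := H)).symm := rfl
  rw [h]
  exact (Word.equiv (M := H)).symm.injective

lemma neword_toList_eq {i j i' j' : ι} (w1 : NeWord H i j) (w2 : NeWord H i' j')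
    (h : w1.prod = w2.prod) : w1.toList = w2.toList := by
  have : w1.toWord = w2.toWord := word_prod_injective h
  exact congrArg Word.toList this

lemma neword_fst_eq {i j i' j' : ι} (w1 : NeWord H i j) (w2 : NeWord H i' j')
    (h : w1.prod = w2.prod) : i = i' := by
  have hl := neword_toList_eq w1 w2 h
  have h1 := w1.toList_head?
  have h2 := w2.toList_head?
  rw [hl, h2] at h1
  exact (Sigma.mk.inj_iff.1 (Option.some.inj h1)).1.symm

lemma commute_two_eq_one {i j : ι} (hij : i ≠ j) {a : H i} {b : H j}
    (ha : a ≠ 1) (hb : b ≠ 1) {h : Monoid.CoprodI H}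
    (hha : h * CoprodI.of a = CoprodI.of a * h)
    (hhb : h * CoprodI.of b = CoprodI.of b * h) : h = 1 := by
  by_contra hne
  have hw : Word.equiv h ≠ Word.empty := by
    intro he
    apply hne
    have heq : Word.equiv.symm (Word.equiv h) = Word.equiv.symm Word.empty := by rw [he]
    rw [Equiv.symm_apply_apply] at heq
    rw [heq]
    exact Word.prod_empty
  obtain ⟨k, l, ω, hω⟩ := NeWord.of_word (Word.equiv h) hw
  have hprod : ω.prod = h := by
    show ω.toWord.prod = h
    rw [hω]
    exact Word.equiv.symm_apply_apply h
  have key : ∀ (s : ι) (c : H s), c ≠ 1 → l ≠ s → h * CoprodI.of c * h⁻¹ = CoprodI.of c →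
      False := by
    intro s c hc hls heq
    have hWp : ((ω.append hls (NeWord.singleton c hc)).append (Ne.symm hls) ω.inv).prod
        = h * CoprodI.of c * h⁻¹ := by
      rw [NeWord.append_prod, NeWord.append_prod, NeWord.prod_singleton, NeWord.inv_prod,
        hprod]
    have hpeq : ((ω.append hls (NeWord.singleton c hc)).append (Ne.symm hls) ω.inv).prod
        = (NeWord.singleton c hc).prod := by
      rw [hWp, NeWord.prod_singleton, heq]
    have hl := neword_toList_eq _ _ hpeq
    have hlen := congrArg List.length hl
    simp only [NeWord.toList, List.length_append, List.length_singleton] at hlen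
    have h1 : 0 < ω.toList.length := List.length_pos_iff.2 ω.toList_ne_nil
    have h2 : 0 < ω.inv.toList.length := List.length_pos_iff.2 ω.inv.toList_ne_nil
    omega
  rcases ne_or_eq l i with hli | rfl
  · exact key i a ha hli (by rw [mul_inv_eq_iff_eq_mul, hha])
  · exact key j b hb hij (by rw [mul_inv_eq_iff_eq_mul, hhb])

lemma conj_conj_ne {i j k : ι} (hij : i ≠ j) (hik : i ≠ k) (hjk : j ≠ k)
    {a : H i} {b : H j} {x : H k} (ha : a ≠ 1) (hb : b ≠ 1) (hx : x ≠ 1)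
    (h : CoprodI.of b * (CoprodI.of a * CoprodI.of x * (CoprodI.of a)⁻¹) *
        (CoprodI.of b)⁻¹
      = CoprodI.of a * (CoprodI.of b * CoprodI.of x * (CoprodI.of b)⁻¹) *
        (CoprodI.of a)⁻¹) : False := by
  have ha' : a⁻¹ ≠ 1 := inv_ne_one.2 ha
  have hb' : b⁻¹ ≠ 1 := inv_ne_one.2 hb
  have key := neword_fst_eq
    (((((NeWord.singleton b hb).append (Ne.symm hij)
      (NeWord.singleton a ha)).append hik
      (NeWord.singleton x hx)).append (Ne.symm hik)
      (NeWord.singleton a⁻¹ ha')).append hij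
      (NeWord.singleton b⁻¹ hb'))
    (((((NeWord.singleton a ha).append hij
      (NeWord.singleton b hb)).append hjk
      (NeWord.singleton x hx)).append (Ne.symm hjk)
      (NeWord.singleton b⁻¹ hb')).append (Ne.symm hij)
      (NeWord.singleton a⁻¹ ha'))
    (by
      simp only [NeWord.append_prod, NeWord.prod_singleton, map_inv]
      simp only [mul_assoc] at h ⊢
      exact h)
  exact hij key.symm

end FP

lemma conj_range_normal (Gp : Type*) [Group Gp] :
    ((MulAut.conj : Gp →* MulAut Gp).range).Normal := by
  constructor
  rintro x ⟨g, rfl⟩ gam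
  refine ⟨gam g, ?_⟩
  refine MulEquiv.ext fun y => ?_
  simp only [MulAut.mul_apply, MulAut.conj_apply, MulAut.inv_def, map_mul, map_inv,
    MulEquiv.apply_symm_apply]

lemma conj_mul_aut {Gp : Type*} [Group Gp] (gam : MulAut Gp) (g : Gp) :
    gam * MulAut.conj g = MulAut.conj (gam g) * gam :=
  MulEquiv.ext fun x => by
    simp only [MulAut.mul_apply, MulAut.conj_apply, map_mul, map_inv]

lemma gen_ne_one {H : Type*} [Group H] [Nontrivial H] {g : H}
    (h : Subgroup.zpowers g = ⊤) : g ≠ 1 := by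
  rintro rfl
  rw [Subgroup.zpowers_one_eq_bot] at h
  exact absurd h bot_ne_top


/-- For a finite connected graph `Γ`, `Out^pc(G_Γ)` is abelian if and
only if `Γ` contains no SILs. -/
theorem Outpc_abelian_iff_no_SIL {V : Type u} [Finite V] (Γ : SimpleGraph V)
    (hconn : Γ.Connected)
    (G : V → Type uG) [∀ v, Group (G v)] [∀ v, Nontrivial (G v)]
    (gen : ∀ v, G v) (hgen : ∀ v, Subgroup.zpowers (gen v) = ⊤)
    (πfam : TV Γ → MulAut (GraphProduct Γ G))
    (hπ : ∀ p : TV Γ, IsPartialConj Γ G gen (πfam p) p.1.1 p.1.2)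
    [hNi : (((MulAut.conj : GraphProduct Γ G →* MulAut (GraphProduct Γ G)).range).subgroupOf
      (Subgroup.closure (Set.range πfam))).Normal] :
    (∀ a b : ↥(Subgroup.closure (Set.range πfam)) ⧸
        ((MulAut.conj : GraphProduct Γ G →* MulAut (GraphProduct Γ G)).range).subgroupOf
          (Subgroup.closure (Set.range πfam)),
      a * b = b * a) ↔ ¬ HasSIL Γ := by

  classical
  constructor
  · -- abelian → no SIL
    intro habel hsil
    obtain ⟨v, w, C₀, hvw, hnadj, hCv, hCw, hvC0, hwC0⟩ := common_comp_of_sil hsil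
    obtain ⟨x₀, hx₀⟩ := compOf_nonempty hCv
    set p : TV Γ := ⟨(v, C₀), hCv⟩ with hp_def
    set q : TV Γ := ⟨(w, C₀), hCw⟩ with hq_def
    obtain ⟨hp1, hp2⟩ : IsPartialConjBy Γ G (gen v) (πfam p) C₀ := hπ p
    obtain ⟨hq1, hq2⟩ : IsPartialConjBy Γ G (gen w) (πfam q) C₀ := hπ q
    have hPmem : πfam p ∈ Subgroup.closure (Set.range πfam) :=
      Subgroup.subset_closure ⟨p, rfl⟩
    have hQmem : πfam q ∈ Subgroup.closure (Set.range πfam) :=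
      Subgroup.subset_closure ⟨q, rfl⟩
    have h1 := habel (QuotientGroup.mk ⟨πfam p, hPmem⟩) (QuotientGroup.mk ⟨πfam q, hQmem⟩)
    rw [← QuotientGroup.mk_mul, ← QuotientGroup.mk_mul, QuotientGroup.eq,
      Subgroup.mem_subgroupOf] at h1
    obtain ⟨g₀, hg₀⟩ := h1
    have hg₀' : MulAut.conj g₀ = (πfam p * πfam q)⁻¹ * (πfam q * πfam p) := by
      simpa using hg₀
    have hrel : πfam p * πfam q =
        MulAut.conj ((πfam q * πfam p) g₀⁻¹) * (πfam q * πfam p) := by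
      have h2 : (πfam p * πfam q) * MulAut.conj g₀ = πfam q * πfam p := by
        rw [hg₀']; group
      calc πfam p * πfam q = (πfam q * πfam p) * (MulAut.conj g₀)⁻¹ := by
            rw [← h2]; group
        _ = (πfam q * πfam p) * MulAut.conj (g₀⁻¹) := by rw [map_inv]
        _ = MulAut.conj ((πfam q * πfam p) g₀⁻¹) * (πfam q * πfam p) := by
            rw [conj_mul_aut]
    set g : GraphProduct Γ G := (πfam q * πfam p) g₀⁻¹ with hg_def
    have heval : ∀ (u : V) (x : G u), (πfam p) ((πfam q) (of Γ G x)) =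
        g * ((πfam q) ((πfam p) (of Γ G x))) * g⁻¹ := by
      intro u x
      have hx := congrArg (fun α : MulAut (GraphProduct Γ G) => α (of Γ G x)) hrel
      simpa only [MulAut.mul_apply, MulAut.conj_apply] using hx
    have hxv := compOf_star_subset hCv hx₀
    have hxw := compOf_star_subset hCw hx₀
    -- the retraction onto G v * G w * G x₀
    set T : Set V := {v, w, x₀} with hT_def
    have hvT : v ∈ T := Set.mem_insert _ _
    have hwT : w ∈ T := Set.mem_insert_of_mem _ (Set.mem_insert _ _)
    have hxT : x₀ ∈ T := Set.mem_insert_of_mem _ (Set.mem_insert_of_mem _ rfl)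
    have hT : ∀ a ∈ T, ∀ b ∈ T, ¬ Γ.Adj a b := by
      intro a ha b hb hadj
      simp only [hT_def, Set.mem_insert_iff, Set.mem_singleton_iff] at ha hb
      rcases ha with rfl | rfl | rfl <;> rcases hb with rfl | rfl | rfl
      · exact Γ.irrefl hadj
      · exact hnadj hadj
      · exact hxv.2 hadj
      · exact hnadj hadj.symm
      · exact Γ.irrefl hadj
      · exact hxw.2 hadj
      · exact hxv.2 hadj.symm
      · exact hxw.2 hadj.symm
      · exact Γ.irrefl hadj
    set r := killTo Γ G T hT with hr_def
    have hrA : r (of Γ G (gen v)) = Monoid.CoprodI.of (M := fun i : T => G i.1) (i := ⟨v, hvT⟩) (gen v) :=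
      killTo_of_mem Γ G T hT hvT (gen v)
    have hrB : r (of Γ G (gen w)) = Monoid.CoprodI.of (M := fun i : T => G i.1) (i := ⟨w, hwT⟩) (gen w) :=
      killTo_of_mem Γ G T hT hwT (gen w)
    have hrX : r (of Γ G (gen x₀)) = Monoid.CoprodI.of (M := fun i : T => G i.1) (i := ⟨x₀, hxT⟩) (gen x₀) :=
      killTo_of_mem Γ G T hT hxT (gen x₀)
    have hivw : (⟨v, hvT⟩ : T) ≠ ⟨w, hwT⟩ := fun h => hvw (congrArg Subtype.val h)
    have hivx : (⟨v, hvT⟩ : T) ≠ ⟨x₀, hxT⟩ := fun h => hxv.1 (congrArg Subtype.val h).symm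
    have hiwx : (⟨w, hwT⟩ : T) ≠ ⟨x₀, hxT⟩ := fun h => hxw.1 (congrArg Subtype.val h).symm
    have hgv1 : gen v ≠ 1 := gen_ne_one (hgen v)
    have hgw1 : gen w ≠ 1 := gen_ne_one (hgen w)
    have hgx1 : gen x₀ ≠ 1 := gen_ne_one (hgen x₀)
    -- g commutes with the generators of G v and G w
    have e1 : of Γ G (gen v) = g * of Γ G (gen v) * g⁻¹ := by
      simpa only [hq2 v hvC0 (gen v), hp2 v hvC0 (gen v)] using heval v (gen v)
    have e2 : of Γ G (gen w) = g * of Γ G (gen w) * g⁻¹ := by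
      simpa only [hq2 w hwC0 (gen w), hp2 w hwC0 (gen w)] using heval w (gen w)
    have e1' := congrArg r e1
    have e2' := congrArg r e2
    simp only [map_mul, map_inv, hrA, hrB] at e1' e2'
    have hAc : r g * Monoid.CoprodI.of (M := fun i : T => G i.1) (i := ⟨v, hvT⟩) (gen v)
        = Monoid.CoprodI.of (M := fun i : T => G i.1) (i := ⟨v, hvT⟩) (gen v) * r g := by
      conv_rhs => rw [e1']
      group
    have hBc : r g * Monoid.CoprodI.of (M := fun i : T => G i.1) (i := ⟨w, hwT⟩) (gen w)
        = Monoid.CoprodI.of (M := fun i : T => G i.1) (i := ⟨w, hwT⟩) (gen w) * r g := by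
      conv_rhs => rw [e2']
      group
    have h0 : r g = 1 := commute_two_eq_one hivw hgv1 hgw1 hAc hBc
    -- the contradiction from the generator of G x₀
    have e3 : of Γ G (gen w) * (of Γ G (gen v) * of Γ G (gen x₀) * (of Γ G (gen v))⁻¹) *
          (of Γ G (gen w))⁻¹ =
        g * (of Γ G (gen v) * (of Γ G (gen w) * of Γ G (gen x₀) * (of Γ G (gen w))⁻¹) *
          (of Γ G (gen v))⁻¹) * g⁻¹ := by
      simpa only [hq1 x₀ hx₀ (gen x₀), map_mul, map_inv, hp2 w hwC0 (gen w),
        hp1 x₀ hx₀ (gen x₀), hq2 v hvC0 (gen v)] using heval x₀ (gen x₀)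
    have e3' := congrArg r e3
    simp only [map_mul, map_inv, hrA, hrB, hrX, h0, one_mul, inv_one, mul_one] at e3'
    exact conj_conj_ne hivw hivx hiwx hgv1 hgw1 hgx1 e3'
  · -- no SIL → abelian
    intro hnosil a b
    haveI hnorm : ((MulAut.conj : GraphProduct Γ G →*
        MulAut (GraphProduct Γ G)).range).Normal := conj_range_normal _
    set φ := QuotientGroup.mk' ((MulAut.conj : GraphProduct Γ G →*
      MulAut (GraphProduct Γ G)).range) with hφ_def
    have hgen_comm : ∀ x ∈ Set.range πfam, ∀ y ∈ Set.range πfam,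
        Commute (φ x) (φ y) := by
      rintro x ⟨p, rfl⟩ y ⟨q, rfl⟩
      obtain ⟨g, hg⟩ := pc_comm Γ G hnosil gen p.2 q.2 (hπ p) (hπ q)
      have key : φ (πfam p * πfam q) = φ (πfam q * πfam p) := by
        rw [hg, map_mul]
        have h1 : φ (MulAut.conj g) = 1 := (QuotientGroup.eq_one_iff _).2 ⟨g, rfl⟩
        rw [h1, one_mul]
      show φ (πfam p) * φ (πfam q) = φ (πfam q) * φ (πfam p)
      rw [← map_mul, ← map_mul, key]
    have base : ∀ y ∈ Subgroup.closure (Set.range πfam), ∀ s ∈ Set.range πfam,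
        Commute (φ s) (φ y) := by
      intro y hy
      induction hy using Subgroup.closure_induction with
      | mem z hz => exact fun s hs => hgen_comm s hs z hz
      | one =>
        intro s hs
        rw [map_one]
        exact Commute.one_right _
      | mul z z' hz hz' ihz ihz' =>
        intro s hs
        rw [map_mul]
        exact (ihz s hs).mul_right (ihz' s hs)
      | inv z hz ih =>
        intro s hs
        rw [map_inv]
        exact (ih s hs).inv_right
    have hcomm_all : ∀ x y : MulAut (GraphProduct Γ G),
        x ∈ Subgroup.closure (Set.range πfam) → y ∈ Subgroup.closure (Set.range πfam) →
        Commute (φ x) (φ y) := by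
      intro x y hx hy
      induction hx using Subgroup.closure_induction with
      | mem z hz => exact base y hy z hz
      | one => rw [map_one]; exact Commute.one_left _
      | mul z z' hz hz' ihz ihz' => rw [map_mul]; exact ihz.mul_left ihz'
      | inv z hz ih => rw [map_inv]; exact ih.inv_left
    refine QuotientGroup.induction_on a fun x => ?_
    refine QuotientGroup.induction_on b fun y => ?_
    rw [← QuotientGroup.mk_mul, ← QuotientGroup.mk_mul, QuotientGroup.eq,
      Subgroup.mem_subgroupOf]
    have hc := hcomm_all x.1 y.1 x.2 y.2
    have hval : (((x * y)⁻¹ * (y * x) : ↥(Subgroup.closure (Set.range πfam))) :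
        MulAut (GraphProduct Γ G)) = ((x : MulAut (GraphProduct Γ G)) * y)⁻¹ *
        ((y : MulAut (GraphProduct Γ G)) * x) := by
      push_cast
      rfl
    rw [← QuotientGroup.ker_mk' ((MulAut.conj : GraphProduct Γ G →*
      MulAut (GraphProduct Γ G)).range), MonoidHom.mem_ker, hval]
    simp only [map_mul, map_inv]
    rw [hc.eq]
    exact inv_mul_cancel _


end ArXiv
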